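/- No circle-center set is finite: there is no finite set S ⊆ ℝ² that is not contained in an affine line and that contains its circle centers. Equivalently, if S ⊆ ℝ² is finite and contains three non-collinear points, then S does not contain its circle centers. -/

import Mathlib

open Real EuclideanGeometry

private abbrev EE := EuclideanSpace ℝ (Fin 2)

private lemma dsq (P Q : EE) : dist P Q ^ 2 = (P 0 - Q 0)^2 + (P 1 - Q 1)^2 := by
  rw [EuclideanSpace.dist_eq, Real.sq_sqrt (by positivity)]
  simp [Fin.sum_univ_two, Real.dist_eq, sq_abs]

private lemma exists_equidistant (A B C : EE) (h : ¬ Collinear ℝ ({A,B,C} : Set EE)) :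
    ∃ O : EE, dist O A = dist O B ∧ dist O A = dist O C := by
  have hind : AffineIndependent ℝ ![A,B,C] := affineIndependent_iff_not_collinear_set.mpr h
  let t : Affine.Simplex ℝ EE 2 := ⟨![A,B,C], hind⟩
  refine ⟨t.circumcenter, ?_, ?_⟩
  · rw [dist_comm, dist_comm _ B]
    have h0 := t.dist_circumcenter_eq_circumradius 0
    have h1 := t.dist_circumcenter_eq_circumradius 1
    simp only [t, Affine.Simplex.points] at h0 h1
    simp_all
    exact h0.trans h1.symm
  · rw [dist_comm, dist_comm _ C]
    have h0 := t.dist_circumcenter_eq_circumradius 0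
    have h2 := t.dist_circumcenter_eq_circumradius 2
    simp only [t, Affine.Simplex.points] at h0 h2
    simp_all
    exact h0.trans h2.symm

private lemma det_eq_zero_of_collinear (A B C : EE) (h : Collinear ℝ ({A,B,C} : Set EE)) :
    (B 0 - A 0)*(C 1 - A 1) - (B 1 - A 1)*(C 0 - A 0) = 0 := by
  obtain ⟨v, hv⟩ := (collinear_iff_of_mem (Set.mem_insert A _)).mp h
  obtain ⟨r, hB⟩ := hv B (by simp)
  obtain ⟨rc, hC⟩ := hv C (by simp)
  rw [hB, hC]
  simp [PiLp.add_apply, PiLp.smul_apply]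
  ring

private lemma exists_lin_rep (A B p : EE) (hq : (B 0 - A 0)^2 + (B 1 - A 1)^2 ≠ 0)
    (hd : (B 0 - A 0)*(p 1 - A 1) - (B 1 - A 1)*(p 0 - A 0) = 0) :
    ∃ r : ℝ, p = r • (B - A) + A := by
  refine ⟨((p 0 - A 0)*(B 0 - A 0) + (p 1 - A 1)*(B 1 - A 1)) /
    ((B 0 - A 0)^2 + (B 1 - A 1)^2), ?_⟩
  refine PiLp.ext fun i => ?_
  fin_cases i
  · show p 0 = (_ : EE) 0
    simp only [PiLp.add_apply, PiLp.smul_apply, PiLp.sub_apply, smul_eq_mul]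
    field_simp
    linear_combination (-(B 1 - A 1)) * hd
  · show p 1 = (_ : EE) 1
    simp only [PiLp.add_apply, PiLp.smul_apply, PiLp.sub_apply, smul_eq_mul]
    field_simp
    linear_combination (B 0 - A 0) * hd

private lemma rep (A B O : EE) (h : dist O A = dist O B)
    (hq : (B 0 - A 0)^2 + (B 1 - A 1)^2 ≠ 0) :
    ∃ s : ℝ, O 0 = (A 0 + B 0)/2 + s * (-(B 1 - A 1)) ∧
      O 1 = (A 1 + B 1)/2 + s * (B 0 - A 0) := by
  have h2 : dist O A ^ 2 = dist O B ^ 2 := by rw [h]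
  rw [dsq, dsq] at h2
  refine ⟨((O 0 - (A 0 + B 0)/2) * (-(B 1 - A 1)) +
    (O 1 - (A 1 + B 1)/2) * (B 0 - A 0)) / ((B 0 - A 0)^2 + (B 1 - A 1)^2), ?_, ?_⟩
  · field_simp
    linear_combination (B 0 - A 0) * h2
  · field_simp
    linear_combination (B 1 - A 1) * h2

/-- A set in the Euclidean plane contains its circle centers if, whenever it contains
three non-collinear points, it contains the point equidistant from all three
(the circumcenter of the triangle they form). -/
def ContainsCircleCenters (S : Set (EuclideanSpace ℝ (Fin 2))) : Prop :=
  ∀ A ∈ S, ∀ B ∈ S, ∀ C ∈ S,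
    ¬ Collinear ℝ ({A, B, C} : Set (EuclideanSpace ℝ (Fin 2))) →
    ∀ O : EuclideanSpace ℝ (Fin 2),
      dist O A = dist O B → dist O A = dist O C → O ∈ S

/-- No circle-center set is finite: a finite subset of the plane not contained in
an affine line cannot contain its circle centers. -/
theorem no_finite_circle_center_set (S : Set (EuclideanSpace ℝ (Fin 2)))
    (hfin : S.Finite) (hline : ¬ Collinear ℝ S) :
    ¬ ContainsCircleCenters S := by
  intro hS
  classical
  -- S has two distinct points
  have hnt : S.Nontrivial := by
    by_contra h
    rcases (Set.not_nontrivial_iff.mp h).eq_empty_or_singleton with h' | ⟨x, h'⟩ <;>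
      rw [h'] at hline
    · exact hline (collinear_empty ℝ _)
    · exact hline (collinear_singleton ℝ _)
  obtain ⟨A₀, hA₀, B₀, hB₀, hne₀⟩ := hnt
  -- minimal-distance pair
  obtain ⟨⟨A, B⟩, hABmem, hminp⟩ :=
    Finset.exists_min_image ((hfin.toFinset ×ˢ hfin.toFinset).filter fun p => p.1 ≠ p.2)
      (fun p => dist p.1 p.2)
      ⟨(A₀, B₀), by simp [Finset.mem_filter, Set.Finite.mem_toFinset, hA₀, hB₀, hne₀]⟩
  simp only [Finset.mem_filter, Finset.mem_product, Set.Finite.mem_toFinset] at hABmem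
  obtain ⟨⟨hA, hB⟩, hAB⟩ := hABmem
  have hmin : ∀ P ∈ S, ∀ Q ∈ S, P ≠ Q → dist A B ≤ dist P Q := by
    intro P hP Q hQ h
    exact hminp (P, Q) (by simp [Finset.mem_filter, Set.Finite.mem_toFinset, hP, hQ, h])
  have hq : (B 0 - A 0)^2 + (B 1 - A 1)^2 = dist A B ^ 2 := by rw [dsq]; ring
  have hdpos : 0 < dist A B := dist_pos.mpr hAB
  have hqpos : 0 < (B 0 - A 0)^2 + (B 1 - A 1)^2 := by rw [hq]; positivity
  -- points on the bisector with parameter s² ≤ 1/4 are too close to A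
  have case1 : ∀ O ∈ S, ∀ s : ℝ, O 0 = (A 0 + B 0)/2 + s * (-(B 1 - A 1)) →
      O 1 = (A 1 + B 1)/2 + s * (B 0 - A 0) → ¬ (s^2 ≤ 1/4) := by
    intro O hO s h0 h1 hs
    have hdOA : dist O A ^ 2 = ((B 0 - A 0)^2 + (B 1 - A 1)^2) * (1/4 + s^2) := by
      rw [dsq, h0, h1]; ring
    have hOA : O ≠ A := by
      intro h
      rw [h, dist_self] at hdOA
      nlinarith [sq_nonneg s]
    have hle := hmin O hO A hA hOA
    nlinarith [dist_nonneg (x := O) (y := A), dist_nonneg (x := A) (y := B)]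
  -- points on the bisector off the midpoint are not collinear with A, B
  have hncO : ∀ O : EE, ∀ s : ℝ, O 0 = (A 0 + B 0)/2 + s * (-(B 1 - A 1)) →
      O 1 = (A 1 + B 1)/2 + s * (B 0 - A 0) → s ≠ 0 →
      ¬ Collinear ℝ ({A, B, O} : Set EE) := by
    intro O s h0 h1 hs hc
    have hd := det_eq_zero_of_collinear A B O hc
    rw [h0, h1] at hd
    have hz : s * ((B 0 - A 0)^2 + (B 1 - A 1)^2) = 0 := by linear_combination hd
    exact hs ((mul_eq_zero.mp hz).resolve_right (ne_of_gt hqpos))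
  -- descent step
  have step : ∀ O ∈ S, ∀ s : ℝ, O 0 = (A 0 + B 0)/2 + s * (-(B 1 - A 1)) →
      O 1 = (A 1 + B 1)/2 + s * (B 0 - A 0) → 1/4 < s^2 →
      ∃ O' ∈ S, ∃ s' : ℝ, (O' 0 = (A 0 + B 0)/2 + s' * (-(B 1 - A 1)) ∧
        O' 1 = (A 1 + B 1)/2 + s' * (B 0 - A 0)) ∧ s'^2 < s^2 := by
    intro O hO s h0 h1 hs
    have hs0 : s ≠ 0 := by intro h; rw [h] at hs; norm_num at hs
    have hnc := hncO O s h0 h1 hs0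
    obtain ⟨O', hab, hao⟩ := exists_equidistant A B O hnc
    have hO'S : O' ∈ S := hS A hA B hB O hO hnc O' hab hao
    obtain ⟨s', h0', h1'⟩ := rep A B O' hab (ne_of_gt hqpos)
    refine ⟨O', hO'S, s', ⟨h0', h1'⟩, ?_⟩
    have e1 : dist O' A ^ 2 = ((B 0 - A 0)^2 + (B 1 - A 1)^2) * (1/4 + s'^2) := by
      rw [dsq, h0', h1']; ring
    have e2 : dist O' O ^ 2 = ((B 0 - A 0)^2 + (B 1 - A 1)^2) * (s' - s)^2 := by
      rw [dsq, h0', h1', h0, h1]; ring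
    have e3 : dist O' A ^ 2 = dist O' O ^ 2 := by rw [hao]
    have e4 : 1/4 + s'^2 = (s' - s)^2 := by
      rw [e1, e2] at e3
      exact mul_left_cancel₀ (ne_of_gt hqpos) e3
    nlinarith [sq_nonneg (s + s'), sq_nonneg (s - s'), sq_nonneg s, sq_nonneg s']
  -- a point of S not collinear with A, B
  have hC : ∃ C ∈ S, ¬ Collinear ℝ ({A, B, C} : Set EE) := by
    by_contra h
    push_neg at h
    apply hline
    rw [collinear_iff_of_mem hA]
    refine ⟨B - A, fun p hp => ?_⟩
    obtain ⟨r, hr⟩ := exists_lin_rep A B p (ne_of_gt hqpos)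
      (det_eq_zero_of_collinear A B p (h p hp))
    exact ⟨r, hr⟩
  obtain ⟨C, hCS, hCnc⟩ := hC
  obtain ⟨O₀, hab₀, hac₀⟩ := exists_equidistant A B C hCnc
  have hO₀ : O₀ ∈ S := hS A hA B hB C hCS hCnc O₀ hab₀ hac₀
  obtain ⟨s₀, h00, h01⟩ := rep A B O₀ hab₀ (ne_of_gt hqpos)
  by_cases hca : s₀^2 ≤ 1/4
  · exact case1 O₀ hO₀ s₀ h00 h01 hca
  push_neg at hca
  -- the finite set of bisector parameters with s² > 1/4
  set T : Set ℝ := {s | (∃ O ∈ S, O 0 = (A 0 + B 0)/2 + s * (-(B 1 - A 1)) ∧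
      O 1 = (A 1 + B 1)/2 + s * (B 0 - A 0)) ∧ 1/4 < s^2} with hT
  have hTfin : T.Finite := by
    apply Set.Finite.subset (hfin.image (fun O : EE =>
      ((O 0 - (A 0 + B 0)/2) * (-(B 1 - A 1)) + (O 1 - (A 1 + B 1)/2) * (B 0 - A 0)) /
        ((B 0 - A 0)^2 + (B 1 - A 1)^2)))
    rintro s ⟨⟨O, hO, h0, h1⟩, -⟩
    refine ⟨O, hO, ?_⟩
    dsimp only
    rw [h0, h1]
    field_simp
    ring
  have hTne : T.Nonempty := ⟨s₀, ⟨O₀, hO₀, h00, h01⟩, hca⟩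
  obtain ⟨s, hsT, hsmin⟩ := Finset.exists_min_image hTfin.toFinset (fun s => s^2)
    (by rwa [Set.Finite.toFinset_nonempty])
  rw [Set.Finite.mem_toFinset] at hsT
  obtain ⟨⟨O, hO, h0, h1⟩, hs⟩ := hsT
  obtain ⟨O', hO', s', ⟨h0', h1'⟩, hlt⟩ := step O hO s h0 h1 hs
  by_cases h14 : s'^2 ≤ 1/4
  · exact case1 O' hO' s' h0' h1' h14
  · push_neg at h14
    have hge : s^2 ≤ s'^2 := hsmin s'
      (by rw [Set.Finite.mem_toFinset]; exact ⟨⟨O', hO', h0', h1'⟩, h14⟩)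
    linarith
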